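/- In a K_{1,r}-free graph G (r ≥ 3), if v is a vertex and S is a k-independent set (inducing a subgraph of maximum degree at most k) with v ∉ S, then v has at most (r-1)(k+1) neighbors in S. -/
import Mathlib


open Finset

variable {V : Type*}

/-- A finset is independent in `G` : no two of its vertices are adjacent. -/
def IsIndepFinset (G : SimpleGraph V) (S : Finset V) : Prop :=
  ∀ u ∈ S, ∀ v ∈ S, ¬ G.Adj u v

/-- A finset dominates `G` : every vertex outside it has a neighbour inside it. -/
def IsDomFinset (G : SimpleGraph V) (D : Finset V) : Prop :=
  ∀ v, v ∉ D → ∃ u ∈ D, G.Adj u v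

/-- The independence number of `G`. -/
noncomputable def indepNum [Fintype V] (G : SimpleGraph V) : ℕ :=
  sSup {n | ∃ S : Finset V, IsIndepFinset G S ∧ S.card = n}

/-- The domination number of `G`. -/
noncomputable def domNum [Fintype V] (G : SimpleGraph V) : ℕ :=
  sInf {n | ∃ D : Finset V, IsDomFinset G D ∧ D.card = n}

/-- `G` is `K_{1,r}`-free: no vertex has `r` pairwise nonadjacent neighbours. -/
def K1rFree (G : SimpleGraph V) (r : ℕ) : Prop :=
  ¬ ∃ (v : V) (A : Finset V), (∀ a ∈ A, G.Adj v a) ∧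
      (∀ a ∈ A, ∀ b ∈ A, a ≠ b → ¬ G.Adj a b) ∧ A.card = r

lemma indep_of_big [Fintype V] [DecidableEq V] (G : SimpleGraph V) [DecidableRel G.Adj] (k : ℕ) :
    ∀ n (T : Finset V), (∀ u ∈ T, (T.filter (fun w => G.Adj u w)).card ≤ k) →
      n * (k + 1) < T.card →
      ∃ A ⊆ T, (∀ a ∈ A, ∀ b ∈ A, a ≠ b → ¬ G.Adj a b) ∧ A.card = n + 1 := by
  intro n
  induction n with
  | zero =>
    intro T _ hcard
    obtain ⟨u, hu⟩ : T.Nonempty := Finset.card_pos.mp (by omega)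
    exact ⟨{u}, by simpa using hu, by simp, by simp⟩
  | succ n ih =>
    intro T hdeg hcard
    obtain ⟨u, hu⟩ : T.Nonempty := Finset.card_pos.mp (by nlinarith)
    set B := insert u (T.filter (fun w => G.Adj u w)) with hB
    have hBcard : B.card ≤ k + 1 := by
      calc B.card ≤ (T.filter (fun w => G.Adj u w)).card + 1 := Finset.card_insert_le _ _
        _ ≤ k + 1 := by have := hdeg u hu; omega
    set T' := T \ B with hT'
    have hT'sub : T' ⊆ T := Finset.sdiff_subset
    have hexp : (n + 1) * (k + 1) = n * (k + 1) + (k + 1) := by ring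
    have hT'card : n * (k + 1) < T'.card := by
      have h1 : T.card ≤ T'.card + B.card :=
        Finset.card_le_card_sdiff_add_card (s := T) (t := B)
      omega
    have hdeg' : ∀ w ∈ T', (T'.filter (fun x => G.Adj w x)).card ≤ k := by
      intro w hw
      calc (T'.filter (fun x => G.Adj w x)).card
          ≤ (T.filter (fun x => G.Adj w x)).card :=
            Finset.card_le_card (Finset.filter_subset_filter _ hT'sub)
        _ ≤ k := hdeg w (hT'sub hw)
    obtain ⟨A, hAsub, hAind, hAcard⟩ := ih T' hdeg' hT'card
    have huA : u ∉ A := by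
      intro h
      have := hAsub h
      simp [hT', hB] at this
    refine ⟨insert u A, ?_, ?_, ?_⟩
    · intro x hx
      rcases Finset.mem_insert.mp hx with rfl | hx
      · exact hu
      · exact hT'sub (hAsub hx)
    · have key : ∀ a ∈ A, ¬ G.Adj u a := by
        intro a ha hadj
        have hmem := hAsub ha
        rw [hT', Finset.mem_sdiff] at hmem
        exact hmem.2 (by rw [hB]; simp [Finset.mem_filter, hmem.1, hadj])
      intro a ha b hb hab
      rcases Finset.mem_insert.mp ha with rfl | ha'
      · rcases Finset.mem_insert.mp hb with rfl | hb'
        · exact absurd rfl hab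
        · exact key b hb'
      · rcases Finset.mem_insert.mp hb with rfl | hb'
        · intro hadj; exact key a ha' hadj.symm
        · exact hAind a ha' b hb' hab
    · rw [Finset.card_insert_of_notMem huA, hAcard]

/-- In a K_{1,r}-free graph (r ≥ 3), a vertex outside a k-independent set S
has at most (r-1)(k+1) neighbours in S. -/
theorem stmt18 [Fintype V] (G : SimpleGraph V) [DecidableRel G.Adj]
    (k r : ℕ) (hr : 3 ≤ r) (hG : K1rFree G r) (S : Finset V)
    (hS : ∀ u ∈ S, (S.filter (fun w => G.Adj u w)).card ≤ k)
    (v : V) (hv : v ∉ S) :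
    (S.filter (fun u => G.Adj v u)).card ≤ (r - 1) * (k + 1) := by
  classical
  by_contra h
  push_neg at h
  set N := S.filter (fun u => G.Adj v u) with hN
  have hdeg : ∀ u ∈ N, (N.filter (fun w => G.Adj u w)).card ≤ k := by
    intro u hu
    calc (N.filter (fun w => G.Adj u w)).card
        ≤ (S.filter (fun w => G.Adj u w)).card :=
          Finset.card_le_card (Finset.filter_subset_filter _ (Finset.filter_subset _ _))
      _ ≤ k := hS u (Finset.mem_filter.mp hu).1
  obtain ⟨A, hAsub, hAind, hAcard⟩ := indep_of_big G k (r - 1) N hdeg h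
  exact hG ⟨v, A, fun a ha => (Finset.mem_filter.mp (hAsub ha)).2, hAind, by omega⟩
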